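/- Let p ≥ 3 be a natural number and let T_p be a connected acyclic simple graph in which every vertex has degree exactly p (the p-regular tree). Then the physical Cheeger constant of T_p equals p − 2: the infimum over all finite nonempty vertex sets W of |∂_E W|/|W| is exactly p − 2. -/

import Mathlib

/-- The edge boundary of a vertex set `W`: all edges of `G` with exactly one endpoint in `W`. -/
def edgeBdry {V : Type*} (G : SimpleGraph V) (W : Set V) : Set (Sym2 V) :=
  {e | e ∈ G.edgeSet ∧ ∃ v w : V, e = s(v, w) ∧ v ∈ W ∧ w ∉ W}

open SimpleGraph Walk Finset

section aux

variable {V : Type*} [DecidableEq V] {G : SimpleGraph V}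

/-- In an acyclic graph, the start of a path has at most one neighbor on the path. -/
lemma nbr_start_unique (hac : G.IsAcyclic) {u v : V} (Q : G.Walk u v) (hQ : Q.IsPath)
    {w1 w2 : V} (h1 : G.Adj u w1) (h2 : G.Adj u w2)
    (m1 : w1 ∈ Q.support) (m2 : w2 ∈ Q.support) : w1 = w2 := by
  have key : ∀ {w : V} (h : G.Adj u w) (m : w ∈ Q.support),
      Q.support = u :: w :: (Q.dropUntil w m).support.tail := by
    intro w h m
    have htp : (Q.takeUntil w m).IsPath := hQ.takeUntil m
    have : (⟨Q.takeUntil w m, htp⟩ : G.Path u w) = Path.singleton h :=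
      hac.path_unique _ _
    have heq : Q.takeUntil w m = Walk.cons h Walk.nil := congrArg Subtype.val this
    conv_lhs => rw [← Q.take_spec m]
    rw [heq]
    rw [Walk.cons_append, Walk.nil_append, Walk.support_cons, (Q.dropUntil w m).support_eq_cons]
    simp
  have e1 := key h1 m1
  have e2 := key h2 m2
  rw [e1] at e2
  exact (List.cons.injEq _ _ _ _).mp ((List.cons.injEq _ _ _ _).mp e2).2 |>.1

/-- In an acyclic `≥3`-regular graph, every path can be extended at its end. -/
lemma exists_extension (hac : G.IsAcyclic) {p : ℕ} (hp : 3 ≤ p)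
    (hreg : ∀ v : V, (G.neighborSet v).ncard = p) {v u : V}
    (P : G.Walk v u) (hP : P.IsPath) : ∃ w, G.Adj u w ∧ w ∉ P.support := by
  by_contra hcon
  push_neg at hcon
  have hsub : (G.neighborSet u).Subsingleton := by
    intro a ha b hb
    have ma : a ∈ P.reverse.support := by
      rw [Walk.support_reverse, List.mem_reverse]; exact hcon a ha
    have mb : b ∈ P.reverse.support := by
      rw [Walk.support_reverse, List.mem_reverse]; exact hcon b hb
    exact nbr_start_unique hac P.reverse hP.reverse ha hb ma mb
  have hne : (G.neighborSet u).Nonempty := by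
    rw [Set.nonempty_iff_ne_empty]
    intro h
    have h3 := hreg u
    rw [h, Set.ncard_empty] at h3
    omega
  obtain ⟨a, ha⟩ := hne
  have : (G.neighborSet u) ⊆ {a} := fun x hx => by simp [hsub hx ha]
  have hle : (G.neighborSet u).ncard ≤ 1 := by
    have := Set.ncard_le_ncard this (Set.finite_singleton a)
    simpa using this
  rw [hreg u] at hle
  omega

/-- Long paths exist. -/
lemma exists_long_path (hac : G.IsAcyclic) {p : ℕ} (hp : 3 ≤ p)
    (hreg : ∀ v : V, (G.neighborSet v).ncard = p) (v0 : V) (n : ℕ) :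
    ∃ (u : V) (P : G.Walk v0 u), P.IsPath ∧ P.length = n := by
  induction n with
  | zero => exact ⟨v0, Walk.nil, Walk.IsPath.nil, rfl⟩
  | succ n ih =>
    obtain ⟨u, P, hP, hl⟩ := ih
    obtain ⟨w, hw, hws⟩ := exists_extension hac hp hreg P hP
    refine ⟨w, P.concat hw, ?_, by simp [Walk.length_concat, hl]⟩
    rw [← Walk.isPath_reverse_iff, Walk.reverse_concat]
    rw [Walk.cons_isPath_iff]
    refine ⟨hP.reverse, ?_⟩
    rw [Walk.support_reverse, List.mem_reverse]
    exact hws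

variable [DecidableRel G.Adj]

/-- Total number of adjacencies inside `W`. -/
def sumIn (G : SimpleGraph V) [DecidableRel G.Adj] (W : Finset V) : ℕ :=
  ∑ v ∈ W, (W.filter (G.Adj v ·)).card

lemma sumIn_insert {W' : Finset V} {u : V} (hu : u ∉ W') :
    sumIn G (insert u W') = sumIn G W' + 2 * (W'.filter (G.Adj u ·)).card := by
  unfold sumIn
  rw [Finset.sum_insert hu]
  have h1 : ((insert u W').filter (G.Adj u ·)) = W'.filter (G.Adj u ·) := by
    rw [Finset.filter_insert]
    simp [G.irrefl]
  have h2 : ∀ v ∈ W', ((insert u W').filter (G.Adj v ·)).card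
      = (W'.filter (G.Adj v ·)).card + (if G.Adj v u then 1 else 0) := by
    intro v hv
    rw [Finset.filter_insert]
    split_ifs with h
    · rw [Finset.card_insert_of_notMem (by simp [hu])]
    · rfl
  rw [h1, Finset.sum_congr rfl h2, Finset.sum_add_distrib]
  have h3 : (∑ v ∈ W', if G.Adj v u then 1 else 0) = (W'.filter (G.Adj u ·)).card := by
    rw [Finset.card_filter]
    exact Finset.sum_congr rfl fun v _ => by simp [G.adj_comm]
  rw [h3]
  ring

/-- Leaf lemma: a finite nonempty vertex set in an acyclic graph has a vertex with
at most one neighbor inside the set. -/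
lemma exists_leaf (hac : G.IsAcyclic) {W : Finset V} (hW : W.Nonempty) :
    ∃ u ∈ W, (W.filter (G.Adj u ·)).card ≤ 1 := by
  classical
  set L : Set ℕ := {n | ∃ (a b : V) (P : G.Walk a b), P.IsPath ∧
      (∀ x ∈ P.support, x ∈ W) ∧ P.length = n} with hL
  obtain ⟨v, hv⟩ := hW
  have h0 : 0 ∈ L := ⟨v, v, Walk.nil, Walk.IsPath.nil, by simpa using hv, rfl⟩
  have hbdd : BddAbove L := by
    refine ⟨W.card, fun n hn => ?_⟩
    obtain ⟨a, b, P, hP, hsub, hlen⟩ := hn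
    have : P.support.toFinset ⊆ W := fun x hx => hsub x (List.mem_toFinset.mp hx)
    have hcard := Finset.card_le_card this
    rw [List.toFinset_card_of_nodup hP.support_nodup, P.length_support] at hcard
    omega
  have hmem := Nat.sSup_mem ⟨0, h0⟩ hbdd
  obtain ⟨a, b, P, hP, hsub, hlen⟩ := hmem
  refine ⟨b, hsub b P.end_mem_support, Finset.card_le_one.mpr ?_⟩
  intro x hx y hy
  simp only [Finset.mem_filter] at hx hy
  have hmemsup : ∀ z ∈ W, G.Adj b z → z ∈ P.support := by
    intro z hz hadj
    by_contra hzs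
    have hQ : (P.concat hadj).IsPath := by
      rw [← Walk.isPath_reverse_iff, Walk.reverse_concat, Walk.cons_isPath_iff]
      exact ⟨hP.reverse, by rw [Walk.support_reverse, List.mem_reverse]; exact hzs⟩
    have : P.length + 1 ∈ L := by
      refine ⟨a, z, P.concat hadj, hQ, ?_, by simp [Walk.length_concat]⟩
      intro x hxs
      rw [Walk.support_concat] at hxs
      rcases List.mem_append.mp hxs with h | h
      · exact hsub x h
      · simp at h; subst h; exact hz
    have := le_csSup hbdd this
    omega
  have mx := hmemsup x hx.1 hx.2
  have my := hmemsup y hy.1 hy.2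
  have mx' : x ∈ P.reverse.support := by rw [Walk.support_reverse, List.mem_reverse]; exact mx
  have my' : y ∈ P.reverse.support := by rw [Walk.support_reverse, List.mem_reverse]; exact my
  exact nbr_start_unique hac P.reverse hP.reverse hx.2 hy.2 mx' my'

/-- Forest bound: internal adjacency count is at most `2 (|W| - 1)`. -/
lemma sumIn_le (hac : G.IsAcyclic) {W : Finset V} (hW : W.Nonempty) :
    sumIn G W + 2 ≤ 2 * W.card := by
  classical
  induction W using Finset.strongInduction with
  | _ W ih =>
  obtain ⟨u, hu, hleaf⟩ := exists_leaf hac hW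
  have herase : W = insert u (W.erase u) := (Finset.insert_erase hu).symm
  have hnm : u ∉ W.erase u := Finset.notMem_erase u W
  by_cases he : (W.erase u).Nonempty
  · have ihW := ih (W.erase u) (Finset.erase_ssubset hu) he
    have hins := sumIn_insert (G := G) hnm
    rw [← herase] at hins
    have hfe : ((W.erase u).filter (G.Adj u ·)).card ≤ 1 := by
      refine le_trans (Finset.card_le_card
        (Finset.filter_subset_filter _ (Finset.erase_subset u W))) hleaf
    have hc : (W.erase u).card = W.card - 1 := Finset.card_erase_of_mem hu
    have hpos : 1 ≤ W.card := Finset.card_pos.mpr hW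
    omega
  · rw [Finset.not_nonempty_iff_eq_empty] at he
    have : W = {u} := by rw [herase, he]; rfl
    subst this
    simp [sumIn, Finset.filter_singleton, G.irrefl]

/-- Path support attains the bound. -/
lemma sumIn_path (hac : G.IsAcyclic) {a b : V} (P : G.Walk a b) (hP : P.IsPath) :
    sumIn G P.support.toFinset = 2 * P.length := by
  induction P with
  | nil => simp [sumIn, Finset.filter_singleton, G.irrefl]
  | @cons u c d h P ih =>
    rw [Walk.cons_isPath_iff] at hP
    have hu : u ∉ P.support.toFinset := by
      rw [List.mem_toFinset]; exact hP.2
    rw [Walk.support_cons, List.toFinset_cons, sumIn_insert hu]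
    have hcard : (P.support.toFinset.filter (G.Adj u ·)).card = 1 := by
      rw [Finset.card_eq_one]
      refine ⟨c, ?_⟩
      ext x
      simp only [Finset.mem_filter, List.mem_toFinset, Finset.mem_singleton]
      constructor
      · rintro ⟨hxs, hadj⟩
        exact nbr_start_unique hac (Walk.cons h P) (by rw [Walk.cons_isPath_iff]; exact hP)
          hadj h (by simp [hxs]) (by simp [P.start_mem_support])
      · rintro rfl
        exact ⟨P.start_mem_support, h⟩
    rw [hcard, ih hP.1]
    simp [Walk.length_cons]
    ring

/-- Boundary cardinality as a sum of out-degrees. -/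
lemma bdry_card (hfin : ∀ v : V, (G.neighborSet v).Finite) (W : Finset V) :
    (edgeBdry G (W : Set V)).ncard
      = ∑ v ∈ W, (((hfin v).toFinset).filter (· ∉ W)).card := by
  classical
  set B : Finset (Sym2 V) :=
    W.biUnion (fun v => ((((hfin v).toFinset)).filter (· ∉ W)).image (fun w => s(v, w))) with hB
  have hset : edgeBdry G (W : Set V) = ↑B := by
    ext e
    simp only [edgeBdry, Set.mem_setOf_eq, Finset.mem_coe, hB, Finset.mem_biUnion,
      Finset.mem_image, Finset.mem_filter, Set.Finite.mem_toFinset, mem_neighborSet,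
      Finset.mem_coe, SimpleGraph.mem_edgeSet]
    constructor
    · rintro ⟨he, v, w, rfl, hv, hw⟩
      exact ⟨v, hv, w, ⟨(G.mem_edgeSet).mp he, hw⟩, rfl⟩
    · rintro ⟨v, hv, w, ⟨hadj, hw⟩, rfl⟩
      exact ⟨hadj, v, w, rfl, hv, hw⟩
  rw [hset, Set.ncard_coe_finset, hB]
  rw [Finset.card_biUnion]
  · refine Finset.sum_congr rfl fun v hv => ?_
    apply Finset.card_image_of_injOn
    intro w1 h1 w2 h2 heq
    rw [Sym2.eq_iff] at heq
    rcases heq with ⟨-, h⟩ | ⟨h1', h2'⟩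
    · exact h
    · exact h2'.trans h1'
  · intro v1 h1 v2 h2 hne
    rw [Function.onFun, Finset.disjoint_left]
    rintro e he1 he2
    simp only [Finset.mem_image, Finset.mem_filter, Set.Finite.mem_toFinset] at he1 he2
    obtain ⟨w1, ⟨-, hw1⟩, rfl⟩ := he1
    obtain ⟨w2, ⟨-, hw2⟩, heq⟩ := he2
    rw [Sym2.eq_iff] at heq
    rcases heq with ⟨h, -⟩ | ⟨h, h'⟩
    · exact hne h.symm
    · exact hw2 (by rw [h']; exact h1)

/-- Out-degree plus in-degree equals `p`. -/
lemma out_add_in (hfin : ∀ v : V, (G.neighborSet v).Finite) {p : ℕ}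
    (hreg : ∀ v : V, (G.neighborSet v).ncard = p)
    (v : V) (W : Finset V) :
    (((hfin v).toFinset).filter (· ∉ W)).card + (W.filter (G.Adj v ·)).card = p := by
  classical
  have h1 : ((hfin v).toFinset).filter (· ∈ W) = W.filter (G.Adj v ·) := by
    ext w
    simp only [Finset.mem_filter, Set.Finite.mem_toFinset, mem_neighborSet]
    exact ⟨fun ⟨a, b⟩ => ⟨b, a⟩, fun ⟨a, b⟩ => ⟨b, a⟩⟩
  have h2 := Finset.card_filter_add_card_filter_not
    (s := (hfin v).toFinset) (p := (· ∈ W))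
  rw [h1] at h2
  rw [← Set.ncard_eq_toFinset_card _ (hfin v), hreg v] at h2
  omega

end aux

/-- the `p`-regular tree (`p ≥ 3`), i.e. a connected acyclic `p`-regular simple
graph, has physical Cheeger constant exactly `p - 2`. -/
theorem physical_cheeger_regular_tree {V : Type*} (G : SimpleGraph V)
    (hconn : G.Connected) (hac : G.IsAcyclic) (p : ℕ) (hp : 3 ≤ p)
    (hreg : ∀ v : V, (G.neighborSet v).ncard = p) :
    sInf {r : ℝ | ∃ W : Finset V, W.Nonempty ∧
        r = ((edgeBdry G (W : Set V)).ncard : ℝ) / (W.card : ℝ)} = (p : ℝ) - 2 := by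
  classical
  have hfin : ∀ v : V, (G.neighborSet v).Finite := by
    intro v
    by_contra h
    have h2 : (G.neighborSet v).Infinite := h
    have h3 := h2.ncard
    rw [hreg v] at h3
    omega
  obtain ⟨v0⟩ := hconn.nonempty
  set S : Set ℝ := {r : ℝ | ∃ W : Finset V, W.Nonempty ∧
      r = ((edgeBdry G (W : Set V)).ncard : ℝ) / (W.card : ℝ)} with hS
  have hkey : ∀ W : Finset V, (edgeBdry G (W : Set V)).ncard + sumIn G W = p * W.card := by
    intro W
    rw [bdry_card hfin W, sumIn, ← Finset.sum_add_distrib,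
      Finset.sum_congr rfl fun v _ => out_add_in hfin hreg v W,
      Finset.sum_const, smul_eq_mul, mul_comm]
  have hlow : ∀ r ∈ S, (p : ℝ) - 2 ≤ r := by
    rintro r ⟨W, hWne, rfl⟩
    have h1 := hkey W
    have h2 := sumIn_le hac hWne
    have hpos : (0 : ℝ) < (W.card : ℝ) := by
      exact_mod_cast Finset.card_pos.mpr hWne
    rw [le_div_iff₀ hpos]
    have hc1 : ((edgeBdry G (W : Set V)).ncard : ℝ) + (sumIn G W : ℝ) = p * W.card := by
      exact_mod_cast h1
    have hc2 : (sumIn G W : ℝ) + 2 ≤ 2 * W.card := by exact_mod_cast h2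
    nlinarith
  have hSne : S.Nonempty := ⟨_, ⟨{v0}, Finset.singleton_nonempty v0, rfl⟩⟩
  have hbdd : BddBelow S := ⟨(p : ℝ) - 2, hlow⟩
  refine le_antisymm ?_ (le_csInf hSne hlow)
  have hub : ∀ n : ℕ, sInf S ≤ (p : ℝ) - 2 + 2 / ((n : ℝ) + 1) := by
    intro n
    obtain ⟨u, P, hP, hl⟩ := exists_long_path hac hp hreg v0 n
    set W := P.support.toFinset with hW
    have hWcard : W.card = n + 1 := by
      rw [hW, List.toFinset_card_of_nodup hP.support_nodup, P.length_support, hl]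
    have hWne : W.Nonempty := Finset.card_pos.mp (by omega)
    have hsum : sumIn G W = 2 * n := by rw [hW, sumIn_path hac P hP, hl]
    have h1 := hkey W
    rw [hsum, hWcard] at h1
    have hr : ((edgeBdry G (W : Set V)).ncard : ℝ) / (W.card : ℝ)
        = (p : ℝ) - 2 + 2 / ((n : ℝ) + 1) := by
      have hc : ((edgeBdry G (W : Set V)).ncard : ℝ) + 2 * n = p * (n + 1) := by
        exact_mod_cast h1
      rw [hWcard]
      push_cast
      rw [div_eq_iff (show ((n : ℝ) + 1) ≠ 0 by positivity)]
      have : ((p : ℝ) - 2 + 2 / ((n : ℝ) + 1)) * ((n : ℝ) + 1)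
          = p * ((n : ℝ) + 1) - 2 * n := by
        field_simp
        ring
      rw [this]
      linarith
    have := csInf_le hbdd (show (((edgeBdry G (W : Set V)).ncard : ℝ) / (W.card : ℝ)) ∈ S
      from ⟨W, hWne, rfl⟩)
    rwa [hr] at this
  have hlim : Filter.Tendsto (fun n : ℕ => (p : ℝ) - 2 + 2 / ((n : ℝ) + 1))
      Filter.atTop (nhds ((p : ℝ) - 2)) := by
    have h0 : Filter.Tendsto (fun n : ℕ => 2 / ((n : ℝ) + 1)) Filter.atTop (nhds 0) := by
      have := tendsto_one_div_add_atTop_nhds_zero_nat.const_mul (2 : ℝ)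
      simpa [div_eq_mul_inv, mul_comm] using this
    simpa using Filter.Tendsto.const_add ((p : ℝ) - 2) h0
  exact ge_of_tendsto' hlim hub
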